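/- Assume R ≻ 0. Let X ∈ ℝ^{n×n} be symmetric with X ⪰ 0 and 𝓡(X) ⪰ 0, and let Z be a symmetric matrix satisfying [Z, −Iₙ] Ω(X) [Z; −Iₙ] = 0 such that A_c(X) − G_c(X) Z is stable. Then Z ⪰ X. -/

import Mathlib

open Matrix Filter

noncomputable section

/-- `Π₁₁(X) = Σᵢ (A₀ⁱ)ᵀ X A₀ⁱ`. -/
def Pi11 {n r : ℕ} (A0 : Fin r → Matrix (Fin n) (Fin n) ℝ)
    (X : Matrix (Fin n) (Fin n) ℝ) : Matrix (Fin n) (Fin n) ℝ :=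
  ∑ i, (A0 i)ᵀ * X * A0 i

/-- `Π₁₂(X) = Σᵢ (A₀ⁱ)ᵀ X B₀ⁱ`. -/
def Pi12 {n m r : ℕ} (A0 : Fin r → Matrix (Fin n) (Fin n) ℝ)
    (B0 : Fin r → Matrix (Fin n) (Fin m) ℝ)
    (X : Matrix (Fin n) (Fin n) ℝ) : Matrix (Fin n) (Fin m) ℝ :=
  ∑ i, (A0 i)ᵀ * X * B0 i

/-- `Π₂₂(X) = Σᵢ (B₀ⁱ)ᵀ X B₀ⁱ`. -/
def Pi22 {n m r : ℕ} (B0 : Fin r → Matrix (Fin n) (Fin m) ℝ)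
    (X : Matrix (Fin n) (Fin n) ℝ) : Matrix (Fin m) (Fin m) ℝ :=
  ∑ i, (B0 i)ᵀ * X * B0 i

/-- The block matrix `Π(X) = [Π₁₁(X), Π₁₂(X); Π₁₂(X)ᵀ, Π₂₂(X)]`. -/
def PiBlock {n m r : ℕ} (A0 : Fin r → Matrix (Fin n) (Fin n) ℝ)
    (B0 : Fin r → Matrix (Fin n) (Fin m) ℝ)
    (X : Matrix (Fin n) (Fin n) ℝ) : Matrix (Fin n ⊕ Fin m) (Fin n ⊕ Fin m) ℝ :=
  fromBlocks (Pi11 A0 X) (Pi12 A0 B0 X) (Pi12 A0 B0 X)ᵀ (Pi22 B0 X)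

/-- `L_c(X) = L + Π₁₂(X)`. -/
def Lc {n m r : ℕ} (L : Matrix (Fin n) (Fin m) ℝ)
    (A0 : Fin r → Matrix (Fin n) (Fin n) ℝ) (B0 : Fin r → Matrix (Fin n) (Fin m) ℝ)
    (X : Matrix (Fin n) (Fin n) ℝ) : Matrix (Fin n) (Fin m) ℝ :=
  L + Pi12 A0 B0 X

/-- `R_c(X) = R + Π₂₂(X)`. -/
def Rc {n m r : ℕ} (R : Matrix (Fin m) (Fin m) ℝ)
    (B0 : Fin r → Matrix (Fin n) (Fin m) ℝ)
    (X : Matrix (Fin n) (Fin n) ℝ) : Matrix (Fin m) (Fin m) ℝ :=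
  R + Pi22 B0 X

/-- `Q_c(X) = Q + Π₁₁(X)`. -/
def Qc {n r : ℕ} (Q : Matrix (Fin n) (Fin n) ℝ)
    (A0 : Fin r → Matrix (Fin n) (Fin n) ℝ)
    (X : Matrix (Fin n) (Fin n) ℝ) : Matrix (Fin n) (Fin n) ℝ :=
  Q + Pi11 A0 X

/-- `A_c(X) = A − B R_c(X)⁻¹ L_c(X)ᵀ`. -/
def Ac {n m r : ℕ} (A : Matrix (Fin n) (Fin n) ℝ) (B : Matrix (Fin n) (Fin m) ℝ)
    (L : Matrix (Fin n) (Fin m) ℝ) (R : Matrix (Fin m) (Fin m) ℝ)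
    (A0 : Fin r → Matrix (Fin n) (Fin n) ℝ) (B0 : Fin r → Matrix (Fin n) (Fin m) ℝ)
    (X : Matrix (Fin n) (Fin n) ℝ) : Matrix (Fin n) (Fin n) ℝ :=
  A - B * (Rc R B0 X)⁻¹ * (Lc L A0 B0 X)ᵀ

/-- `G_c(X) = B R_c(X)⁻¹ Bᵀ`. -/
def Gc {n m r : ℕ} (B : Matrix (Fin n) (Fin m) ℝ) (R : Matrix (Fin m) (Fin m) ℝ)
    (B0 : Fin r → Matrix (Fin n) (Fin m) ℝ)
    (X : Matrix (Fin n) (Fin n) ℝ) : Matrix (Fin n) (Fin n) ℝ :=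
  B * (Rc R B0 X)⁻¹ * Bᵀ

/-- `H_c(X) = Q_c(X) − L_c(X) R_c(X)⁻¹ L_c(X)ᵀ`. -/
def Hc {n m r : ℕ} (Q : Matrix (Fin n) (Fin n) ℝ) (L : Matrix (Fin n) (Fin m) ℝ)
    (R : Matrix (Fin m) (Fin m) ℝ)
    (A0 : Fin r → Matrix (Fin n) (Fin n) ℝ) (B0 : Fin r → Matrix (Fin n) (Fin m) ℝ)
    (X : Matrix (Fin n) (Fin n) ℝ) : Matrix (Fin n) (Fin n) ℝ :=
  Qc Q A0 X - Lc L A0 B0 X * (Rc R B0 X)⁻¹ * (Lc L A0 B0 X)ᵀ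

/-- The SCARE residual
`𝓡(X) = AᵀX + XA + Q_c(X) − (XB + L_c(X)) R_c(X)⁻¹ (XB + L_c(X))ᵀ`. -/
def scareRes {n m r : ℕ} (A : Matrix (Fin n) (Fin n) ℝ) (B : Matrix (Fin n) (Fin m) ℝ)
    (Q : Matrix (Fin n) (Fin n) ℝ) (L : Matrix (Fin n) (Fin m) ℝ)
    (R : Matrix (Fin m) (Fin m) ℝ)
    (A0 : Fin r → Matrix (Fin n) (Fin n) ℝ) (B0 : Fin r → Matrix (Fin n) (Fin m) ℝ)
    (X : Matrix (Fin n) (Fin n) ℝ) : Matrix (Fin n) (Fin n) ℝ :=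
  Aᵀ * X + X * A + Qc Q A0 X -
    (X * B + Lc L A0 B0 X) * (Rc R B0 X)⁻¹ * (X * B + Lc L A0 B0 X)ᵀ

/-- `Ω(X) = [−G_c(X), −A_c(X); −A_c(X)ᵀ, H_c(X)]`. -/
def Omega {n m r : ℕ} (A : Matrix (Fin n) (Fin n) ℝ) (B : Matrix (Fin n) (Fin m) ℝ)
    (Q : Matrix (Fin n) (Fin n) ℝ) (L : Matrix (Fin n) (Fin m) ℝ)
    (R : Matrix (Fin m) (Fin m) ℝ)
    (A0 : Fin r → Matrix (Fin n) (Fin n) ℝ) (B0 : Fin r → Matrix (Fin n) (Fin m) ℝ)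
    (X : Matrix (Fin n) (Fin n) ℝ) : Matrix (Fin n ⊕ Fin n) (Fin n ⊕ Fin n) ℝ :=
  fromBlocks (-(Gc B R B0 X)) (-(Ac A B L R A0 B0 X)) (-(Ac A B L R A0 B0 X))ᵀ
    (Hc Q L R A0 B0 X)

/-- The `2n×n` matrix `[X; −Iₙ]` stacking `X` over `−Iₙ`. -/
def stackNegI {n : ℕ} (X : Matrix (Fin n) (Fin n) ℝ) :
    Matrix (Fin n ⊕ Fin n) (Fin n) ℝ :=
  fromRows X (-1)

/-- The pair `(A, B)` is stabilizable: `yᴴ(A − λI) = 0`, `yᴴB = 0`, `Re λ ≥ 0` imply `y = 0`. -/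
def Stabilizable {n m : ℕ} (A : Matrix (Fin n) (Fin n) ℝ)
    (B : Matrix (Fin n) (Fin m) ℝ) : Prop :=
  ∀ (lam : ℂ) (y : Fin n → ℂ), 0 ≤ lam.re →
    vecMul (star y) (A.map Complex.ofReal - lam • 1) = 0 →
    vecMul (star y) (B.map Complex.ofReal) = 0 → y = 0

/-- The pair `(C, A)` is detectable: `(A − λI)z = 0`, `Cz = 0`, `Re λ ≥ 0` imply `z = 0`. -/
def Detectable {p n : ℕ} (C : Matrix (Fin p) (Fin n) ℝ)
    (A : Matrix (Fin n) (Fin n) ℝ) : Prop :=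
  ∀ (lam : ℂ) (z : Fin n → ℂ), 0 ≤ lam.re →
    mulVec (A.map Complex.ofReal - lam • 1) z = 0 →
    mulVec (C.map Complex.ofReal) z = 0 → z = 0

/-- A real square matrix is stable if all its (complex) eigenvalues have negative real part. -/
def IsStableMatrix {n : ℕ} (M : Matrix (Fin n) (Fin n) ℝ) : Prop :=
  ∀ μ ∈ spectrum ℂ (M.map Complex.ofReal), μ.re < 0

/-- Kernel condition: `(Q − LR⁻¹Lᵀ)z = 0` implies `Lᵀz = 0` and `A₀ⁱ z = 0` for all `i`. -/
def KernelCondition {n m r : ℕ} (Q : Matrix (Fin n) (Fin n) ℝ)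
    (L : Matrix (Fin n) (Fin m) ℝ) (R : Matrix (Fin m) (Fin m) ℝ)
    (A0 : Fin r → Matrix (Fin n) (Fin n) ℝ) : Prop :=
  ∀ z : Fin n → ℂ,
    mulVec ((Q - L * R⁻¹ * Lᵀ).map Complex.ofReal) z = 0 →
    mulVec (Lᵀ.map Complex.ofReal) z = 0 ∧
      ∀ i, mulVec ((A0 i).map Complex.ofReal) z = 0

/-- `Γ(X) = [[0, −A, −B], [−Aᵀ, Q_c(X), L_c(X)], [−Bᵀ, L_c(X)ᵀ, R_c(X)]]`. -/
def Gamma {n m r : ℕ} (A : Matrix (Fin n) (Fin n) ℝ) (B : Matrix (Fin n) (Fin m) ℝ)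
    (Q : Matrix (Fin n) (Fin n) ℝ) (L : Matrix (Fin n) (Fin m) ℝ)
    (R : Matrix (Fin m) (Fin m) ℝ)
    (A0 : Fin r → Matrix (Fin n) (Fin n) ℝ) (B0 : Fin r → Matrix (Fin n) (Fin m) ℝ)
    (X : Matrix (Fin n) (Fin n) ℝ) :
    Matrix ((Fin n ⊕ Fin n) ⊕ Fin m) ((Fin n ⊕ Fin n) ⊕ Fin m) ℝ :=
  fromBlocks (fromBlocks 0 (-A) (-Aᵀ) (Qc Q A0 X))
    (fromRows (-B) (Lc L A0 B0 X))
    (fromRows (-B) (Lc L A0 B0 X))ᵀ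
    (Rc R B0 X)

/-- `F_W(Y) = [Y; −Iₙ]ᵀ (Ω(Y) − Ω(W)) [Y; −Iₙ]`. -/
def FW {n m r : ℕ} (A : Matrix (Fin n) (Fin n) ℝ) (B : Matrix (Fin n) (Fin m) ℝ)
    (Q : Matrix (Fin n) (Fin n) ℝ) (L : Matrix (Fin n) (Fin m) ℝ)
    (R : Matrix (Fin m) (Fin m) ℝ)
    (A0 : Fin r → Matrix (Fin n) (Fin n) ℝ) (B0 : Fin r → Matrix (Fin n) (Fin m) ℝ)
    (W Y : Matrix (Fin n) (Fin n) ℝ) : Matrix (Fin n) (Fin n) ℝ :=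
  (stackNegI Y)ᵀ * (Omega A B Q L R A0 B0 Y - Omega A B Q L R A0 B0 W) * stackNegI Y

/-- `𝓕_W(Z) = Kᵀ Π(Z) K` with `K = [−Iₙ; R_c(W)⁻¹ (L_c(W) + W B)ᵀ]`. -/
def Fcal {n m r : ℕ} (B : Matrix (Fin n) (Fin m) ℝ)
    (L : Matrix (Fin n) (Fin m) ℝ) (R : Matrix (Fin m) (Fin m) ℝ)
    (A0 : Fin r → Matrix (Fin n) (Fin n) ℝ) (B0 : Fin r → Matrix (Fin n) (Fin m) ℝ)
    (W Z : Matrix (Fin n) (Fin n) ℝ) : Matrix (Fin n) (Fin n) ℝ :=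
  (fromRows (-1 : Matrix (Fin n) (Fin n) ℝ)
      ((Rc R B0 W)⁻¹ * (Lc L A0 B0 W + W * B)ᵀ))ᵀ *
    PiBlock A0 B0 Z *
    fromRows (-1 : Matrix (Fin n) (Fin n) ℝ)
      ((Rc R B0 W)⁻¹ * (Lc L A0 B0 W + W * B)ᵀ)

section Helpers
open NormedSpace Topology
open scoped ENNReal NNReal

attribute [local instance] Matrix.linftyOpNormedRing Matrix.linftyOpNormedAlgebra
  Matrix.linftyOpNormedAddCommGroup

variable {n' : ℕ}

private def mulVecCLM' (𝕜 : Type*) [RCLike 𝕜] (n : ℕ) (w : Fin n → 𝕜) :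
    Matrix (Fin n) (Fin n) 𝕜 →L[𝕜] (Fin n → 𝕜) :=
  LinearMap.toContinuousLinearMap
    { toFun := fun P => P.mulVec w
      map_add' := fun P Q => Matrix.add_mulVec P Q w
      map_smul' := fun c P => Matrix.smul_mulVec c P w }

@[simp] private lemma mulVecCLM'_apply (𝕜 : Type*) [RCLike 𝕜] (n : ℕ) (w : Fin n → 𝕜)
    (P : Matrix (Fin n) (Fin n) 𝕜) : mulVecCLM' 𝕜 n w P = P.mulVec w := rfl

private def dMulVecCLM (D : Matrix (Fin n') (Fin n') ℝ) : (Fin n' → ℝ) →L[ℝ] (Fin n' → ℝ) :=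
  LinearMap.toContinuousLinearMap (Matrix.mulVecLin D)

@[simp] private lemma dMulVecCLM_apply (D : Matrix (Fin n') (Fin n') ℝ) (x : Fin n' → ℝ) :
    dMulVecCLM D x = D.mulVec x := rfl

private lemma exp_mulVec_eigen (M : Matrix (Fin n') (Fin n') ℂ) (w : Fin n' → ℂ) (lam : ℂ)
    (hw : M.mulVec w = lam • w) :
    (exp M).mulVec w = Complex.exp lam • w := by
  have hpow : ∀ k : ℕ, (M ^ k).mulVec w = lam ^ k • w := by
    intro k
    induction k with
    | zero => simp
    | succ k ih =>
      rw [pow_succ, ← Matrix.mulVec_mulVec, hw, Matrix.mulVec_smul, ih, smul_smul, pow_succ,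
        mul_comm]
  have hsum : Summable fun k : ℕ => ((Nat.factorial k : ℂ))⁻¹ • M ^ k :=
    expSeries_summable' (𝕂 := ℂ) M
  have : (exp M).mulVec w = ∑' k : ℕ, ((Nat.factorial k : ℂ))⁻¹ • (M ^ k).mulVec w := by
    rw [exp_eq_tsum (𝕂 := ℂ)]
    have := (mulVecCLM' ℂ n' w).map_tsum hsum
    simpa using this
  rw [this]
  have : ∀ k : ℕ, ((Nat.factorial k : ℂ))⁻¹ • (M ^ k).mulVec w
      = (((Nat.factorial k : ℂ))⁻¹ * lam ^ k) • w := by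
    intro k; rw [hpow k, smul_smul]
  rw [tsum_congr this, Summable.tsum_smul_const]
  · congr 1
    rw [Complex.exp_eq_exp_ℂ, exp_eq_tsum (𝕂 := ℂ)]
    simp [smul_eq_mul]
  · simpa [smul_eq_mul] using (expSeries_summable' (𝕂 := ℂ) lam)

private lemma matrix_spectrum_toLin' (N : Matrix (Fin n') (Fin n') ℂ) :
    spectrum ℂ (Matrix.toLin' N) = spectrum ℂ N := by
  have h := AlgEquiv.spectrum_eq (Matrix.toLinAlgEquiv' : Matrix (Fin n') (Fin n') ℂ ≃ₐ[ℂ] _) N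
  rw [← h]; rfl

private lemma spectrum_exp_subset (M : Matrix (Fin n') (Fin n') ℂ) :
    spectrum ℂ (exp M) ⊆ Complex.exp '' spectrum ℂ M := by
  intro μ hμ
  have h1 : Module.End.HasEigenvalue (Matrix.toLin' (exp M)) μ :=
    Module.End.hasEigenvalue_iff_mem_spectrum.mpr (by rwa [matrix_spectrum_toLin'])
  set E := Module.End.eigenspace (Matrix.toLin' (exp M)) μ with hE
  have hnt : Nontrivial E := Submodule.nontrivial_iff_ne_bot.mpr h1
  have hinv : ∀ x ∈ E, Matrix.toLin' M x ∈ E := by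
    intro x hx
    have hx' : Matrix.toLin' (exp M) x = μ • x := Module.End.mem_eigenspace_iff.mp hx
    have hcomm : exp M * M = M * exp M := ((Commute.refl M).exp_left).eq
    have : Matrix.toLin' (exp M) (Matrix.toLin' M x) = μ • Matrix.toLin' M x := by
      rw [← Matrix.toLin'_mul_apply, hcomm, Matrix.toLin'_mul_apply, hx', LinearMap.map_smul]
    exact Module.End.mem_eigenspace_iff.mpr this
  let g : Module.End ℂ E := (Matrix.toLin' M).restrict hinv
  obtain ⟨lam, hlam⟩ := Module.End.exists_eigenvalue g
  obtain ⟨w0, hw0⟩ := hlam.exists_hasEigenvector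
  have wne : (w0 : Fin n' → ℂ) ≠ 0 := by
    simpa [Submodule.coe_eq_zero] using hw0.2
  have hMw : M.mulVec (w0 : Fin n' → ℂ) = lam • (w0 : Fin n' → ℂ) := by
    have := congrArg (Subtype.val) hw0.apply_eq_smul
    simpa [g, LinearMap.restrict_apply, Matrix.toLin'_apply] using this
  have hlamspec : lam ∈ spectrum ℂ M := by
    rw [← matrix_spectrum_toLin']
    refine Module.End.hasEigenvalue_iff_mem_spectrum.mp ?_
    refine Module.End.hasEigenvalue_of_hasEigenvector ⟨Module.End.mem_eigenspace_iff.mpr ?_, wne⟩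
    simpa [Matrix.toLin'_apply] using hMw
  have h2 : (exp M).mulVec (w0 : Fin n' → ℂ) = μ • (w0 : Fin n' → ℂ) := by
    have := Module.End.mem_eigenspace_iff.mp w0.2
    simpa [Matrix.toLin'_apply] using this
  have h3 := exp_mulVec_eigen M _ lam hMw
  have : Complex.exp lam = μ := by
    have h4 : Complex.exp lam • (w0 : Fin n' → ℂ) = μ • (w0 : Fin n' → ℂ) := by rw [← h3, h2]
    exact smul_left_injective ℂ wne h4
  exact ⟨lam, hlamspec, this⟩

private lemma tendsto_pow_zero_of_spectralRadius_lt_one {A : Type*} [NormedRing A]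
    [NormedAlgebra ℂ A] [CompleteSpace A] (a : A) (h : spectralRadius ℂ a < 1) :
    Tendsto (fun k : ℕ => a ^ k) atTop (𝓝 0) := by
  obtain ⟨r, hρr, hr1⟩ := ENNReal.lt_iff_exists_nnreal_btwn.mp h
  have hgel := spectrum.pow_nnnorm_pow_one_div_tendsto_nhds_spectralRadius a
  have hev : ∀ᶠ k : ℕ in atTop, (‖a ^ k‖₊ : ℝ≥0∞) ^ (1 / (k : ℝ)) < (r : ℝ≥0∞) :=
    hgel.eventually_lt_const hρr
  have hev2 : ∀ᶠ k : ℕ in atTop, ‖a ^ k‖ ≤ (r : ℝ) ^ k := by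
    filter_upwards [hev, eventually_ge_atTop 1] with k hk hk1
    have hkne : ((k : ℕ) : ℝ) ≠ 0 := by positivity
    have hk' : (‖a ^ k‖₊ : ℝ≥0∞) < (r : ℝ≥0∞) ^ ((k : ℕ) : ℝ) := by
      have := ENNReal.rpow_lt_rpow hk (by positivity : (0:ℝ) < ((k : ℕ) : ℝ))
      rwa [← ENNReal.rpow_mul, one_div, inv_mul_cancel₀ hkne, ENNReal.rpow_one] at this
    rw [ENNReal.rpow_natCast, ← ENNReal.coe_pow, ENNReal.coe_lt_coe] at hk'
    exact_mod_cast hk'.le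
  have hr1' : (r : ℝ) < 1 := by exact_mod_cast hr1
  have hpow : Tendsto (fun k : ℕ => (r : ℝ) ^ k) atTop (𝓝 0) :=
    tendsto_pow_atTop_nhds_zero_of_lt_one r.coe_nonneg hr1'
  have hnorm : Tendsto (fun k : ℕ => ‖a ^ k‖) atTop (𝓝 0) :=
    squeeze_zero' (Eventually.of_forall fun k => norm_nonneg _) hev2 hpow
  exact tendsto_zero_iff_norm_tendsto_zero.mpr hnorm

private lemma exp_pow_tendsto_zero (M : Matrix (Fin n') (Fin n') ℂ)
    (hM : ∀ μ ∈ spectrum ℂ M, μ.re < 0) :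
    Tendsto (fun k : ℕ => (exp M) ^ k) atTop (𝓝 0) := by
  apply tendsto_pow_zero_of_spectralRadius_lt_one
  have hfin : (spectrum ℂ (exp M)).Finite :=
    ((Matrix.finite_spectrum M).image Complex.exp).subset (spectrum_exp_subset M)
  set F := hfin.toFinset with hF
  have hlt : ∀ μ ∈ F, ‖μ‖₊ < 1 := by
    intro μ hμ
    rw [hF, Set.Finite.mem_toFinset] at hμ
    obtain ⟨lam, hlam, rfl⟩ := spectrum_exp_subset M hμ
    have : ‖Complex.exp lam‖ < 1 := by
      rw [Complex.norm_exp]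
      exact Real.exp_lt_one_iff.mpr (hM lam hlam)
    exact_mod_cast this
  set c : NNReal := F.sup (fun μ => ‖μ‖₊) with hc
  have hc1 : c < 1 := Finset.sup_lt_iff (by norm_num : (⊥ : NNReal) < 1) |>.mpr hlt
  have hle : spectralRadius ℂ (exp M) ≤ (c : ℝ≥0∞) := by
    rw [spectralRadius]
    refine iSup₂_le fun μ hμ => ?_
    exact_mod_cast Finset.le_sup (f := fun μ => ‖μ‖₊) (Set.Finite.mem_toFinset hfin |>.mpr hμ)
  exact lt_of_le_of_lt hle (by exact_mod_cast hc1)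

private lemma norm_map_ofReal (B : Matrix (Fin n') (Fin n') ℝ) :
    ‖B.map Complex.ofReal‖ = ‖B‖ := by
  rw [Matrix.linfty_opNorm_def, Matrix.linfty_opNorm_def]
  congr 1
  ext i
  simp [Matrix.map_apply]

private lemma real_exp_pow_tendsto_zero (Ahat : Matrix (Fin n') (Fin n') ℝ)
    (hstab : IsStableMatrix Ahat) :
    Tendsto (fun k : ℕ => (exp Ahat) ^ k) atTop (𝓝 0) := by
  set M : Matrix (Fin n') (Fin n') ℂ := Ahat.map Complex.ofReal with hM
  have hcont : Continuous fun P : Matrix (Fin n') (Fin n') ℝ => P.map Complex.ofReal :=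
    continuous_id.matrix_map Complex.continuous_ofReal
  have hmap : (exp Ahat).map Complex.ofReal = exp M := by
    have h1 : (Complex.ofRealHom.mapMatrix : Matrix (Fin n') (Fin n') ℝ →+* _) (exp Ahat)
        = exp ((Complex.ofRealHom.mapMatrix : Matrix (Fin n') (Fin n') ℝ →+* _) Ahat) :=
      map_exp _ hcont Ahat
    have h2 : exp M = exp M := rfl
    rw [RingHom.mapMatrix_apply, RingHom.mapMatrix_apply] at h1
    rw [hM]
    convert h1.trans h2.symm.symm using 2
    rfl
  have hC := exp_pow_tendsto_zero M hstab
  replace hC := (tendsto_zero_iff_norm_tendsto_zero (E := Matrix (Fin n') (Fin n') ℂ)).mp hC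
  refine (tendsto_zero_iff_norm_tendsto_zero (E := Matrix (Fin n') (Fin n') ℝ)).mpr ?_
  convert hC using 2 with k
  rw [← norm_map_ofReal]
  congr 1
  rw [← hmap]
  have := (map_pow (Complex.ofRealHom.mapMatrix :
    Matrix (Fin n') (Fin n') ℝ →+* _) (exp Ahat) k).symm
  simpa [RingHom.mapMatrix_apply, Complex.ofRealHom] using this.symm

private lemma lyapunov (Ahat S D : Matrix (Fin n') (Fin n') ℝ)
    (hstab : IsStableMatrix Ahat) (hS : S.PosSemidef) (hD : D.IsHermitian)
    (heq : Ahatᵀ * D + D * Ahat = -S) : D.PosSemidef := by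
  refine Matrix.PosSemidef.of_dotProduct_mulVec_nonneg hD fun v => ?_
  have hstar : ∀ x : Fin n' → ℝ, star x = x := fun x => funext fun i => rfl
  rw [hstar]
  set w : ℝ → (Fin n' → ℝ) := fun t => (exp (t • Ahat)).mulVec v with hw
  set g : ℝ → ℝ := fun t => w t ⬝ᵥ D.mulVec (w t) with hg
  have hw' : ∀ t : ℝ, HasDerivAt w (Ahat.mulVec (w t)) t := by
    intro t
    have hφ : HasDerivAt (fun u : ℝ => exp (u • Ahat)) (Ahat * exp (t • Ahat)) t :=
      hasDerivAt_exp_smul_const' (𝕂 := ℝ) Ahat t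
    have := (mulVecCLM' ℝ n' v).hasFDerivAt.comp_hasDerivAt t hφ
    exact this.congr_deriv (Matrix.mulVec_mulVec v Ahat (exp (t • Ahat))).symm
  have hquad : ∀ x : Fin n' → ℝ,
      (Ahat.mulVec x) ⬝ᵥ D.mulVec x + x ⬝ᵥ D.mulVec (Ahat.mulVec x) = -(x ⬝ᵥ S.mulVec x) := by
    intro x
    have h1 : (Ahat.mulVec x) ⬝ᵥ D.mulVec x = x ⬝ᵥ (Ahatᵀ * D).mulVec x := by
      rw [← Matrix.mulVec_mulVec, Matrix.dotProduct_mulVec x, Matrix.vecMul_transpose]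
    have h2 : x ⬝ᵥ D.mulVec (Ahat.mulVec x) = x ⬝ᵥ (D * Ahat).mulVec x := by
      rw [Matrix.mulVec_mulVec]
    rw [h1, h2, ← dotProduct_add, ← Matrix.add_mulVec, heq, Matrix.neg_mulVec,
      dotProduct_neg]
  have hg' : ∀ t : ℝ, HasDerivAt g (-(w t ⬝ᵥ S.mulVec (w t))) t := by
    intro t
    have hu : HasDerivAt (fun s => D.mulVec (w s)) (D.mulVec (Ahat.mulVec (w t))) t := by
      have := (dMulVecCLM D).hasFDerivAt.comp_hasDerivAt t (hw' t)
      simpa [Function.comp_def] using this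
    have hsum : HasDerivAt (fun s => w s ⬝ᵥ D.mulVec (w s))
        (Ahat.mulVec (w t) ⬝ᵥ D.mulVec (w t) + w t ⬝ᵥ D.mulVec (Ahat.mulVec (w t))) t := by
      have comp1 : ∀ i : Fin n', HasDerivAt (fun s => w s i) (Ahat.mulVec (w t) i) t := fun i =>
        ((ContinuousLinearMap.proj (R := ℝ) (φ := fun _ : Fin n' => ℝ)
          i).hasFDerivAt.comp_hasDerivAt t (hw' t))
      have comp2 : ∀ i : Fin n', HasDerivAt (fun s => D.mulVec (w s) i)
          (D.mulVec (Ahat.mulVec (w t)) i) t := fun i =>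
        ((ContinuousLinearMap.proj (R := ℝ) (φ := fun _ : Fin n' => ℝ)
          i).hasFDerivAt.comp_hasDerivAt t hu)
      have : ∀ i ∈ Finset.univ, HasDerivAt (fun s => w s i * D.mulVec (w s) i)
          (Ahat.mulVec (w t) i * D.mulVec (w t) i + w t i * D.mulVec (Ahat.mulVec (w t)) i) t :=
        fun i _ => (comp1 i).mul (comp2 i)
      have hs := HasDerivAt.sum this
      simpa [dotProduct, Finset.sum_add_distrib, Finset.sum_fn] using hs
    rw [hquad (w t)] at hsum
    exact hsum
  have hdiff : Differentiable ℝ g := fun t => (hg' t).differentiableAt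
  have hderiv_nonpos : ∀ t, deriv g t ≤ 0 := by
    intro t
    rw [(hg' t).deriv]
    have := hS.dotProduct_mulVec_nonneg (w t)
    rw [hstar] at this
    linarith
  have hanti : Antitone g := antitone_of_deriv_nonpos hdiff hderiv_nonpos
  have hlim : Tendsto (fun k : ℕ => g k) atTop (𝓝 0) := by
    have hwk : ∀ k : ℕ, w (k : ℝ) = ((exp Ahat) ^ k).mulVec v := by
      intro k
      rw [hw]
      simp only
      rw [show ((k : ℝ) • Ahat) = (k • Ahat : Matrix (Fin n') (Fin n') ℝ) from
        (Nat.cast_smul_eq_nsmul ℝ k Ahat), Matrix.exp_nsmul]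
    have hdecay := real_exp_pow_tendsto_zero Ahat hstab
    have hwlim : Tendsto (fun k : ℕ => w (k : ℝ)) atTop (𝓝 0) := by
      have hcont := (mulVecCLM' ℝ n' v).continuous
      have := (hcont.tendsto 0).comp hdecay
      simp only [Function.comp_def] at this
      simp only [hwk]
      simpa using this
    have hq : Continuous fun x : Fin n' → ℝ => x ⬝ᵥ D.mulVec x :=
      continuous_id.dotProduct (continuous_const.matrix_mulVec continuous_id)
    have := (hq.tendsto 0).comp hwlim
    simp only [Function.comp_def] at this
    simpa [hg] using this
  have hle : ∀ k : ℕ, g (k : ℝ) ≤ g 0 := fun k => hanti (Nat.cast_nonneg k)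
  have h0 : (0 : ℝ) ≤ g 0 := le_of_tendsto hlim (Eventually.of_forall hle)
  have : g 0 = v ⬝ᵥ D.mulVec v := by
    simp [hg, hw]
  linarith [this ▸ h0]

end Helpers


section MainAux
variable {n m : ℕ}

private lemma transpose_eq_of_isHermitian {k : ℕ} {M : Matrix (Fin k) (Fin k) ℝ}
    (h : M.IsHermitian) : Mᵀ = M := by
  have := h
  rwa [Matrix.IsHermitian, Matrix.conjTranspose_eq_transpose_of_trivial] at this

private lemma riccati_identity (A X Qc' : Matrix (Fin n) (Fin n) ℝ)
    (B Lc' : Matrix (Fin n) (Fin m) ℝ) (Rc' : Matrix (Fin m) (Fin m) ℝ)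
    (hXT : Xᵀ = X) (hRcinvT : (Rc'⁻¹)ᵀ = Rc'⁻¹) :
    Aᵀ * X + X * A + Qc' - (X * B + Lc') * Rc'⁻¹ * (X * B + Lc')ᵀ
      = (A - B * Rc'⁻¹ * Lc'ᵀ)ᵀ * X + X * (A - B * Rc'⁻¹ * Lc'ᵀ)
        + (Qc' - Lc' * Rc'⁻¹ * Lc'ᵀ) - X * (B * Rc'⁻¹ * Bᵀ) * X := by
  rw [Matrix.transpose_sub, Matrix.transpose_mul, Matrix.transpose_mul,
    Matrix.transpose_add, Matrix.transpose_mul, Matrix.transpose_transpose, hRcinvT, hXT]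
  simp only [Matrix.add_mul, Matrix.mul_add, Matrix.sub_mul, Matrix.mul_sub]
  simp only [Matrix.mul_assoc]
  abel

private lemma omega_quadratic (G Ac' H Z : Matrix (Fin n) (Fin n) ℝ) (hZT : Zᵀ = Z) :
    (fromRows Z (-1 : Matrix (Fin n) (Fin n) ℝ))ᵀ * (fromBlocks (-G) (-Ac') (-Ac')ᵀ H) * fromRows Z (-1 : Matrix (Fin n) (Fin n) ℝ)
      = Ac'ᵀ * Z + Z * Ac' + H - Z * G * Z := by
  rw [Matrix.transpose_fromRows, Matrix.mul_assoc, Matrix.fromBlocks_mul_fromRows,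
    Matrix.fromCols_mul_fromRows, hZT]
  simp only [Matrix.transpose_neg, Matrix.neg_mul, Matrix.mul_neg, Matrix.mul_one,
    Matrix.one_mul, Matrix.transpose_one, neg_neg, Matrix.mul_add, Matrix.add_mul,
    Matrix.mul_assoc]
  abel

private lemma lyap_eq (Ac' G Z X Res H : Matrix (Fin n) (Fin n) ℝ)
    (hZT : Zᵀ = Z) (hGT : Gᵀ = G)
    (hE1 : Ac'ᵀ * Z + Z * Ac' + H = Z * G * Z)
    (hres : Res = Ac'ᵀ * X + X * Ac' + H - X * G * X) :
    (Ac' - G * Z)ᵀ * (Z - X) + (Z - X) * (Ac' - G * Z)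
      = -(Res + (Z - X) * G * (Z - X)) := by
  have hH : H = Z * G * Z - Ac'ᵀ * Z - Z * Ac' := by rw [← hE1]; abel
  rw [hres, hH, Matrix.transpose_sub, Matrix.transpose_mul, hZT, hGT]
  simp only [Matrix.add_mul, Matrix.mul_add, Matrix.sub_mul, Matrix.mul_sub]
  simp only [Matrix.mul_assoc]
  abel

end MainAux

/-- If R ≻ 0, X ⪰ 0 with 𝓡(X) ⪰ 0, and Z is a stabilizing solution of the CARE
frozen at X, then Z ⪰ X. -/
theorem stmt11 (n m r : ℕ) (hn : 0 < n) (hm : 0 < m) (hr : 0 < r)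
    (A Q : Matrix (Fin n) (Fin n) ℝ) (B L : Matrix (Fin n) (Fin m) ℝ)
    (R : Matrix (Fin m) (Fin m) ℝ)
    (A0 : Fin r → Matrix (Fin n) (Fin n) ℝ) (B0 : Fin r → Matrix (Fin n) (Fin m) ℝ)
    (hQ : Q.IsHermitian) (hRsymm : R.IsHermitian)
    (hRpd : R.PosDef)
    (X Z : Matrix (Fin n) (Fin n) ℝ)
    (hX : X.IsHermitian) (hZ : Z.IsHermitian)
    (hXpsd : X.PosSemidef) (hres : (scareRes A B Q L R A0 B0 X).PosSemidef)
    (hfroz : (stackNegI Z)ᵀ * Omega A B Q L R A0 B0 X * stackNegI Z = 0)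
    (hstable : IsStableMatrix (Ac A B L R A0 B0 X - Gc B R B0 X * Z)) :
    (Z - X).PosSemidef := by
  have hXT : Xᵀ = X := transpose_eq_of_isHermitian hX
  have hZT : Zᵀ = Z := transpose_eq_of_isHermitian hZ
  have hPi22 : (Pi22 B0 X).PosSemidef := by
    rw [Pi22]
    refine Finset.sum_induction _ Matrix.PosSemidef
      (fun a b ha hb => ha.add hb) Matrix.PosSemidef.zero ?_
    intro i _
    have := hXpsd.conjTranspose_mul_mul_same (B0 i)
    rwa [Matrix.conjTranspose_eq_transpose_of_trivial] at this
  have hRcpd : (Rc R B0 X).PosDef := by rw [Rc]; exact hRpd.add_posSemidef hPi22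
  have hRcT : (Rc R B0 X)ᵀ = Rc R B0 X := transpose_eq_of_isHermitian hRcpd.isHermitian
  have hRcinvT : ((Rc R B0 X)⁻¹)ᵀ = (Rc R B0 X)⁻¹ := by
    rw [Matrix.transpose_nonsing_inv, hRcT]
  have hGpsd : (Gc B R B0 X).PosSemidef := by
    have := hRcpd.inv.posSemidef.mul_mul_conjTranspose_same B
    rw [Matrix.conjTranspose_eq_transpose_of_trivial] at this
    rw [Gc]
    exact this
  have hGT : (Gc B R B0 X)ᵀ = Gc B R B0 X := transpose_eq_of_isHermitian hGpsd.isHermitian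
  have hE1 : (Ac A B L R A0 B0 X)ᵀ * Z + Z * Ac A B L R A0 B0 X + Hc Q L R A0 B0 X
      = Z * Gc B R B0 X * Z := by
    have h := hfroz
    rw [stackNegI, Omega, omega_quadratic _ _ _ _ hZT] at h
    exact sub_eq_zero.mp h
  have hresid : scareRes A B Q L R A0 B0 X
      = (Ac A B L R A0 B0 X)ᵀ * X + X * Ac A B L R A0 B0 X + Hc Q L R A0 B0 X
        - X * Gc B R B0 X * X := by
    rw [scareRes, Ac, Gc, Hc]
    exact riccati_identity A X (Qc Q A0 X) B (Lc L A0 B0 X) (Rc R B0 X) hXT hRcinvT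
  have hkey := lyap_eq (Ac A B L R A0 B0 X) (Gc B R B0 X) Z X
    (scareRes A B Q L R A0 B0 X) (Hc Q L R A0 B0 X) hZT hGT hE1 hresid
  have hDGD : ((Z - X) * Gc B R B0 X * (Z - X)).PosSemidef := by
    have := hGpsd.mul_mul_conjTranspose_same (Z - X)
    rwa [(hZ.sub hX).eq] at this
  exact lyapunov (Ac A B L R A0 B0 X - Gc B R B0 X * Z)
    (scareRes A B Q L R A0 B0 X + (Z - X) * Gc B R B0 X * (Z - X)) (Z - X)
    hstable (hres.add hDGD) (hZ.sub hX) hkey
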